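/- For all integers d ≥ 2, N ≥ 1 and every probability measure μ ∈ M(d,N), setting x_μ := H(μ)/(N log d), the neural complexity satisfies I(μ)/(N log d) ≤ x_μ(1 − x_μ) ≤ 1/4. -/

import Mathlib

open Filter

noncomputable def entropy {α : Type*} [Fintype α] (p : α → ℝ) : ℝ :=
  -∑ x, p x * Real.log (p x)

def IsPMF {α : Type*} [Fintype α] (p : α → ℝ) : Prop :=
  (∀ x, 0 ≤ p x) ∧ ∑ x, p x = 1

-- pushforward of a pmf
noncomputable def push {α β : Type*} [Fintype α] [Fintype β] [DecidableEq β]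
    (f : α → β) (p : α → ℝ) : β → ℝ :=
  fun y => ∑ x, if f x = y then p x else 0

lemma push_nonneg {α β : Type*} [Fintype α] [Fintype β] [DecidableEq β]
    (f : α → β) (p : α → ℝ) (hp : ∀ x, 0 ≤ p x) (y : β) : 0 ≤ push f p y := by
  refine Finset.sum_nonneg fun x _ => ?_
  split <;> simp [hp x]

lemma push_sum {α β : Type*} [Fintype α] [Fintype β] [DecidableEq β]
    (f : α → β) (p : α → ℝ) : ∑ y, push f p y = ∑ x, p x := by
  simp only [push]
  rw [Finset.sum_comm]
  refine Finset.sum_congr rfl fun x _ => ?_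
  simp

lemma isPMF_push {α β : Type*} [Fintype α] [Fintype β] [DecidableEq β]
    (f : α → β) (p : α → ℝ) (hp : IsPMF p) : IsPMF (push f p) :=
  ⟨push_nonneg f p hp.1, by rw [push_sum, hp.2]⟩

lemma le_push {α β : Type*} [Fintype α] [Fintype β] [DecidableEq β]
    (f : α → β) (p : α → ℝ) (hp : ∀ x, 0 ≤ p x) (x : α) : p x ≤ push f p (f x) := by
  have := Finset.single_le_sum (f := fun x' => if f x' = f x then p x' else 0)
    (fun x' _ => by split <;> simp [hp x']) (Finset.mem_univ x)
  simpa [push] using this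

lemma entropy_push_le {α β : Type*} [Fintype α] [Fintype β] [DecidableEq β]
    (f : α → β) (p : α → ℝ) (hp : IsPMF p) : entropy (push f p) ≤ entropy p := by
  rw [entropy, entropy, neg_le_neg_iff]
  have key : ∑ y, push f p y * Real.log (push f p y)
      = ∑ x, p x * Real.log (push f p (f x)) := by
    have : ∀ y, push f p y * Real.log (push f p y)
        = ∑ x, if f x = y then p x * Real.log (push f p y) else 0 := by
      intro y
      rw [push, Finset.sum_mul]
      refine Finset.sum_congr rfl fun x _ => ?_
      split <;> simp
    rw [Finset.sum_congr rfl fun y _ => this y, Finset.sum_comm]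
    refine Finset.sum_congr rfl fun x _ => ?_
    simp
  rw [key]
  refine Finset.sum_le_sum fun x _ => ?_
  rcases eq_or_lt_of_le (hp.1 x) with h | h
  · simp [← h]
  · have hle := le_push f p hp.1 x
    exact mul_le_mul_of_nonneg_left (Real.log_le_log h hle) h.le

lemma prob_le_one {α : Type*} [Fintype α] (p : α → ℝ) (hp : IsPMF p) (x : α) : p x ≤ 1 := by
  rw [← hp.2]
  exact Finset.single_le_sum (fun x' _ => hp.1 x') (Finset.mem_univ x)

lemma entropy_nonneg {α : Type*} [Fintype α] (p : α → ℝ) (hp : IsPMF p) : 0 ≤ entropy p := by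
  rw [entropy, ← Finset.sum_neg_distrib]
  refine Finset.sum_nonneg fun x _ => ?_
  have := Real.negMulLog_nonneg (hp.1 x) (prob_le_one p hp x)
  simpa [Real.negMulLog] using this

lemma entropy_le_log_card {α : Type*} [Fintype α] (p : α → ℝ) (hp : IsPMF p) :
    entropy p ≤ Real.log (Fintype.card α) := by
  classical
  set y : α → ℝ := fun x => if p x = 0 then 1 else (p x)⁻¹ with hy
  have h1 : entropy p = ∑ x, p x * Real.log (y x) := by
    rw [entropy, ← Finset.sum_neg_distrib]
    refine Finset.sum_congr rfl fun x _ => ?_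
    by_cases h : p x = 0
    · simp [hy, h]
    · rw [hy]
      simp only [if_neg h]
      rw [Real.log_inv]
      ring
  have hmem : ∀ x ∈ Finset.univ, y x ∈ Set.Ioi (0:ℝ) := by
    intro x _
    rw [hy]
    by_cases h : p x = 0
    · simp [h]
    · simp only [if_neg h, Set.mem_Ioi]
      exact inv_pos.2 (lt_of_le_of_ne (hp.1 x) (Ne.symm h))
  have hjen := (strictConcaveOn_log_Ioi.concaveOn).le_map_sum
      (fun x _ => hp.1 x) hp.2 hmem
  simp only [smul_eq_mul] at hjen
  rw [h1]
  refine hjen.trans ?_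
  have h2 : ∑ x, p x * y x = ((Finset.univ.filter fun x => p x ≠ 0).card : ℝ) := by
    rw [hy]
    rw [Finset.sum_congr rfl (fun x _ => show p x * (if p x = 0 then 1 else (p x)⁻¹)
      = if p x ≠ 0 then 1 else 0 by by_cases h : p x = 0 <;> simp [h])]
    rw [Finset.sum_ite, Finset.sum_const, Finset.sum_const]
    simp
  rw [h2]
  have hcard : ((Finset.univ.filter fun x => p x ≠ 0).card : ℝ) ≤ (Fintype.card α : ℝ) := by
    exact_mod_cast Finset.card_filter_le _ _
  have hpos : (0:ℝ) < ((Finset.univ.filter fun x => p x ≠ 0).card : ℝ) := by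
    have : (Finset.univ.filter fun x => p x ≠ 0).Nonempty := by
      by_contra h
      rw [Finset.not_nonempty_iff_eq_empty] at h
      have : ∑ x, p x = 0 := by
        refine Finset.sum_eq_zero fun x _ => ?_
        by_contra hx
        have : x ∈ Finset.univ.filter fun x => p x ≠ 0 := by simp [hx]
        simp [h] at this
      rw [hp.2] at this; norm_num at this
    exact_mod_cast Finset.card_pos.2 this
  exact Real.log_le_log hpos hcard

noncomputable def margin {d N : ℕ} (μ : (Fin N → Fin d) → ℝ) (S : Finset (Fin N)) :
    (({ i // i ∈ S }) → Fin d) → ℝ :=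
  fun y => ∑ x : Fin N → Fin d, if ∀ i : { i // i ∈ S }, x i.1 = y i then μ x else 0

/-- Mutual information between `X_S` and `X_{Sᶜ}`. -/
noncomputable def MIS {d N : ℕ} (μ : (Fin N → Fin d) → ℝ) (S : Finset (Fin N)) : ℝ :=
  entropy (margin μ S) + entropy (margin μ Sᶜ) - entropy μ

/-- The Edelman–Sporns–Tononi neural complexity. -/
noncomputable def neural {d N : ℕ} (μ : (Fin N → Fin d) → ℝ) : ℝ :=
  (1 / (N + 1 : ℝ)) * ∑ S : Finset (Fin N), (1 / (N.choose S.card : ℝ)) * MIS μ S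

noncomputable def avgEntropy {d N : ℕ} (μ : (Fin N → Fin d) → ℝ) (k : ℕ) : ℝ :=
  (1 / (N.choose k : ℝ)) *
    ∑ S ∈ Finset.powersetCard k (Finset.univ : Finset (Fin N)), entropy (margin μ S)

/-- The entropy profile `h_X : [0,1] → [0,1]`, piecewise affine interpolation of
`k/N ↦ (average entropy of subsystems of size k)/(N log d)`. -/
noncomputable def profile {d N : ℕ} (μ : (Fin N → Fin d) → ℝ) (t : ℝ) : ℝ :=
  if t ≤ 0 then 0 else
    (avgEntropy μ (⌈t * N⌉.toNat - 1)
      + (t * N - ((⌈t * N⌉.toNat - 1 : ℕ) : ℝ)) *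
        (avgEntropy μ ⌈t * N⌉.toNat - avgEntropy μ (⌈t * N⌉.toNat - 1)))
      / (N * Real.log d)

lemma margin_eq_push {d N : ℕ} (μ : (Fin N → Fin d) → ℝ) (S : Finset (Fin N)) :
    margin μ S = push (fun x (i : { i // i ∈ S }) => x i.1) μ := by
  funext y
  rw [margin, push]
  refine Finset.sum_congr rfl fun x _ => ?_
  congr 1
  · simp [funext_iff]

lemma entropy_margin_le_entropy {d N : ℕ} (μ : (Fin N → Fin d) → ℝ) (hμ : IsPMF μ)
    (S : Finset (Fin N)) : entropy (margin μ S) ≤ entropy μ := by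
  rw [margin_eq_push]
  exact entropy_push_le _ μ hμ

lemma entropy_margin_le_card {d N : ℕ} (μ : (Fin N → Fin d) → ℝ) (hμ : IsPMF μ)
    (S : Finset (Fin N)) : entropy (margin μ S) ≤ S.card * Real.log d := by
  have h1 : entropy (margin μ S) ≤ Real.log (Fintype.card (({ i // i ∈ S }) → Fin d)) := by
    refine entropy_le_log_card _ ?_
    rw [margin_eq_push]
    exact isPMF_push _ μ hμ
  refine h1.trans_eq ?_
  rw [Fintype.card_fun, Fintype.card_coe, Fintype.card_fin]
  push_cast
  rw [Real.log_pow]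

lemma avgEntropy_le {d N : ℕ} (μ : (Fin N → Fin d) → ℝ) (hμ : IsPMF μ)
    (k : ℕ) (hk : k ≤ N) :
    avgEntropy μ k ≤ min ((k : ℝ) * Real.log d) (entropy μ) := by
  have hC : (0:ℝ) < (N.choose k : ℝ) := by exact_mod_cast Nat.choose_pos hk
  rw [avgEntropy]
  have hsum : ∑ S ∈ Finset.powersetCard k (Finset.univ : Finset (Fin N)),
      entropy (margin μ S) ≤ (N.choose k : ℝ) * min ((k : ℝ) * Real.log d) (entropy μ) := by
    have := Finset.sum_le_card_nsmul (Finset.powersetCard k (Finset.univ : Finset (Fin N)))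
      (fun S => entropy (margin μ S)) (min ((k : ℝ) * Real.log d) (entropy μ)) ?_
    · rw [Finset.card_powersetCard, Finset.card_univ, Fintype.card_fin] at this
      simpa [nsmul_eq_mul] using this
    · intro S hS
      have hcard : S.card = k := (Finset.mem_powersetCard.1 hS).2
      refine le_min ?_ (entropy_margin_le_entropy μ hμ S)
      rw [← hcard]
      exact entropy_margin_le_card μ hμ S
  calc (1 / (N.choose k : ℝ)) * ∑ S ∈ Finset.powersetCard k (Finset.univ : Finset (Fin N)),
        entropy (margin μ S)
      ≤ (1 / (N.choose k : ℝ)) * ((N.choose k : ℝ) * min ((k : ℝ) * Real.log d) (entropy μ)) :=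
        mul_le_mul_of_nonneg_left hsum (by positivity)
    _ = min ((k : ℝ) * Real.log d) (entropy μ) := by field_simp

lemma sum_by_card {N : ℕ} (g : Finset (Fin N) → ℝ) :
    ∑ S : Finset (Fin N), g S
      = ∑ k ∈ Finset.range (N + 1), ∑ S ∈ Finset.powersetCard k (Finset.univ : Finset (Fin N)), g S := by
  rw [← Finset.sum_fiberwise_of_maps_to (g := Finset.card) (t := Finset.range (N + 1))
    (fun S _ => by simpa [Nat.lt_succ_iff] using Finset.card_le_univ S)]
  refine Finset.sum_congr rfl fun k _ => Finset.sum_congr ?_ fun _ _ => rfl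
  ext S; simp [Finset.mem_powersetCard]

lemma neural_eq {d N : ℕ} (μ : (Fin N → Fin d) → ℝ) :
    neural μ = (1 / (N + 1 : ℝ)) *
      (2 * ∑ k ∈ Finset.range (N + 1), avgEntropy μ k - (N + 1 : ℝ) * entropy μ) := by
  rw [neural]
  congr 1
  have hsplit : ∀ S : Finset (Fin N), (1 / (N.choose S.card : ℝ)) * MIS μ S
      = (1 / (N.choose S.card : ℝ)) * entropy (margin μ S)
        + (1 / (N.choose S.card : ℝ)) * entropy (margin μ Sᶜ)
        - (1 / (N.choose S.card : ℝ)) * entropy μ := by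
    intro S; rw [MIS]; ring
  rw [Finset.sum_congr rfl fun S _ => hsplit S, Finset.sum_sub_distrib, Finset.sum_add_distrib]
  have hcompl : ∑ S : Finset (Fin N), (1 / (N.choose S.card : ℝ)) * entropy (margin μ Sᶜ)
      = ∑ S : Finset (Fin N), (1 / (N.choose S.card : ℝ)) * entropy (margin μ S) := by
    refine Fintype.sum_bijective (fun S : Finset (Fin N) => Sᶜ)
      (Function.Involutive.bijective compl_compl) _ _ fun S => ?_
    congr 2
    rw [Finset.card_compl, Fintype.card_fin, Nat.choose_symm (Finset.card_le_univ S |>.trans_eq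
      (by simp))]
  rw [hcompl]
  have hmain : ∑ S : Finset (Fin N), (1 / (N.choose S.card : ℝ)) * entropy (margin μ S)
      = ∑ k ∈ Finset.range (N + 1), avgEntropy μ k := by
    rw [sum_by_card]
    refine Finset.sum_congr rfl fun k hk => ?_
    rw [avgEntropy, Finset.mul_sum]
    refine Finset.sum_congr rfl fun S hS => ?_
    rw [(Finset.mem_powersetCard.1 hS).2]
  have hconst : ∑ S : Finset (Fin N), (1 / (N.choose S.card : ℝ)) * entropy μ
      = (N + 1 : ℝ) * entropy μ := by
    rw [← Finset.sum_mul]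
    congr 1
    rw [sum_by_card (fun S => (1 / (N.choose S.card : ℝ)))]
    have : ∀ k ∈ Finset.range (N + 1),
        ∑ S ∈ Finset.powersetCard k (Finset.univ : Finset (Fin N)),
          (1 / (N.choose S.card : ℝ)) = 1 := by
      intro k hk
      have hk' : k ≤ N := Nat.lt_succ_iff.1 (Finset.mem_range.1 hk)
      have hC : ((N.choose k : ℕ) : ℝ) ≠ 0 := by
        exact_mod_cast (Nat.choose_pos hk').ne'
      rw [Finset.sum_congr rfl fun S hS => by
        rw [(Finset.mem_powersetCard.1 hS).2]]
      rw [Finset.sum_const, Finset.card_powersetCard, Finset.card_univ, Fintype.card_fin,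
        nsmul_eq_mul]
      field_simp
    rw [Finset.sum_congr rfl this, Finset.sum_const, Finset.card_range, nsmul_eq_mul]
    push_cast
    ring
  rw [hmain, hconst]
  ring

lemma key_ineq (n m rj : ℝ) (h0 : 0 ≤ rj) (hjm : rj ≤ m) (hmj : m ≤ rj + 1) (hmn : m ≤ n) :
    n * (rj * (rj + 1) + 2 * (n - rj) * m - (n + 1) * m) ≤ (n + 1) * (m * (n - m)) := by
  have hjn : rj ≤ n := hjm.trans hmn
  have t1 : 0 ≤ (rj + 1 - m) * rj * (n - rj) :=
    mul_nonneg (mul_nonneg (by linarith) h0) (by linarith)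
  have t2 : 0 ≤ (rj + 1) * ((m - rj) * (n - m)) :=
    mul_nonneg (by linarith) (mul_nonneg (by linarith) (by linarith))
  have t3 : 0 ≤ (n - rj) * ((m - rj) * (rj + 1 - m)) :=
    mul_nonneg (by linarith) (mul_nonneg (by linarith) (by linarith))
  nlinarith [t1, t2, t3]

lemma key2 (n m rj L : ℝ) (hn : 1 ≤ n) (hL : 0 < L) (h0 : 0 ≤ rj) (hjm : rj ≤ m)
    (hmj : m ≤ rj + 1) (hmn : m ≤ n) :
    (1 / (n + 1)) * (2 * (L * (rj * (rj + 1) / 2) + (n - rj) * (m * L)) - (n + 1) * (m * L))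
      ≤ (m * L / (n * L)) * (1 - m * L / (n * L)) * (n * L) := by
  have hn0 : (0:ℝ) < n := lt_of_lt_of_le one_pos hn
  have key := key_ineq n m rj h0 hjm hmj hmn
  rw [show (m * L / (n * L)) * (1 - m * L / (n * L)) * (n * L)
      = L * ((n + 1) * (m * (n - m))) / ((n + 1) * n) by field_simp]
  rw [show (1 / (n + 1)) * (2 * (L * (rj * (rj + 1) / 2) + (n - rj) * (m * L)) - (n + 1) * (m * L))
      = L * (n * (rj * (rj + 1) + 2 * (n - rj) * m - (n + 1) * m)) / ((n + 1) * n) by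
    field_simp]
  exact div_le_div_of_nonneg_right (mul_le_mul_of_nonneg_left key hL.le) (by positivity)

lemma gauss (j : ℕ) : ∑ k ∈ Finset.range (j + 1), (k : ℝ) = j * (j + 1) / 2 := by
  induction j with
  | zero => simp
  | succ j ih => rw [Finset.sum_range_succ, ih]; push_cast; ring

/-- For all integers `d ≥ 2`, `N ≥ 1` and every probability measure
`μ ∈ M(d,N)`, setting `x_μ := H(μ)/(N log d)`, the neural complexity satisfies
`I(μ)/(N log d) ≤ x_μ (1 − x_μ) ≤ 1/4`. -/
theorem stmt0 (d N : ℕ) (hd : 2 ≤ d) (hN : 1 ≤ N)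
    (μ : (Fin N → Fin d) → ℝ) (hμ : IsPMF μ) :
    neural μ / (N * Real.log d) ≤
      (entropy μ / (N * Real.log d)) * (1 - entropy μ / (N * Real.log d)) ∧
    (entropy μ / (N * Real.log d)) * (1 - entropy μ / (N * Real.log d)) ≤ 1 / 4 := by
  have hL : (0:ℝ) < Real.log d := Real.log_pos (by exact_mod_cast hd)
  set L : ℝ := Real.log d with hLdef
  set H : ℝ := entropy μ with hHdef
  have hn1 : (1:ℝ) ≤ (N:ℝ) := by exact_mod_cast hN
  have hn0 : (0:ℝ) < (N:ℝ) := lt_of_lt_of_le one_pos hn1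
  have hNL : (0:ℝ) < (N:ℝ) * L := mul_pos hn0 hL
  have hH0 : 0 ≤ H := entropy_nonneg μ hμ
  have hHN : H ≤ (N:ℝ) * L := by
    have h1 := entropy_le_log_card μ hμ
    rw [Fintype.card_fun, Fintype.card_fin, Fintype.card_fin] at h1
    rw [hHdef]
    refine h1.trans_eq ?_
    push_cast
    rw [Real.log_pow]
  constructor
  · -- main inequality
    set m : ℝ := H / L with hmdef
    have hHm : H = m * L := (div_mul_cancel₀ H hL.ne').symm
    have hm0 : 0 ≤ m := div_nonneg hH0 hL.le
    have hmn : m ≤ (N:ℝ) := by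
      rw [hmdef, div_le_iff₀ hL]
      linarith [hHN]
    set j : ℕ := ⌊m⌋₊ with hjdef
    have hj1 : (j:ℝ) ≤ m := Nat.floor_le hm0
    have hj2 : m < (j:ℝ) + 1 := Nat.lt_floor_add_one m
    have hjN : j ≤ N := by
      have : (j:ℝ) ≤ (N:ℝ) := hj1.trans hmn
      exact_mod_cast this
    -- sum of mins
    have hminsum : ∑ k ∈ Finset.range (N + 1), min ((k:ℝ) * L) H
        = L * ((j:ℝ) * ((j:ℝ) + 1) / 2) + ((N:ℝ) - (j:ℝ)) * H := by
      rw [Finset.range_eq_Ico, ← Finset.sum_Ico_consecutive _ (Nat.zero_le (j+1))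
        (by omega : j + 1 ≤ N + 1)]
      have e1 : ∑ k ∈ Finset.Ico 0 (j+1), min ((k:ℝ) * L) H
          = L * ((j:ℝ) * ((j:ℝ) + 1) / 2) := by
        rw [← Finset.range_eq_Ico]
        rw [Finset.sum_congr rfl fun k hk => min_eq_left (by
          have hkj : (k:ℝ) ≤ (j:ℝ) := by
            exact_mod_cast Nat.lt_succ_iff.1 (Finset.mem_range.1 hk)
          calc (k:ℝ) * L ≤ (j:ℝ) * L := mul_le_mul_of_nonneg_right hkj hL.le
            _ ≤ m * L := mul_le_mul_of_nonneg_right hj1 hL.le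
            _ = H := hHm.symm)]
        rw [← Finset.sum_mul, gauss, mul_comm]
      have e2 : ∑ k ∈ Finset.Ico (j+1) (N+1), min ((k:ℝ) * L) H
          = ((N:ℝ) - (j:ℝ)) * H := by
        rw [Finset.sum_congr rfl fun k hk => min_eq_right (by
          have hkj : (j:ℝ) + 1 ≤ (k:ℝ) := by
            exact_mod_cast (Finset.mem_Ico.1 hk).1
          have : m * L ≤ (k:ℝ) * L :=
            mul_le_mul_of_nonneg_right (hj2.le.trans hkj) hL.le
          linarith [hHm])]
        rw [Finset.sum_const, Nat.card_Ico, nsmul_eq_mul]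
        congr 1
        have : N + 1 - (j + 1) = N - j := by omega
        rw [this, Nat.cast_sub hjN]
      rw [e1, e2]
    -- bound on neural
    have hA : ∑ k ∈ Finset.range (N + 1), avgEntropy μ k
        ≤ L * ((j:ℝ) * ((j:ℝ) + 1) / 2) + ((N:ℝ) - (j:ℝ)) * H := by
      rw [← hminsum]
      refine Finset.sum_le_sum fun k hk => ?_
      exact avgEntropy_le μ hμ k (Nat.lt_succ_iff.1 (Finset.mem_range.1 hk))
    have hneural : neural μ ≤ (1 / ((N:ℝ) + 1)) *
        (2 * (L * ((j:ℝ) * ((j:ℝ) + 1) / 2) + ((N:ℝ) - (j:ℝ)) * (m * L))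
          - ((N:ℝ) + 1) * (m * L)) := by
      rw [neural_eq, ← hHdef, hHm]
      refine mul_le_mul_of_nonneg_left ?_ (by positivity)
      have := hA
      rw [hHm] at this
      linarith
    rw [div_le_iff₀ hNL, hHm]
    refine hneural.trans ?_
    exact key2 (N:ℝ) m (j:ℝ) L hn1 hL (Nat.cast_nonneg j) hj1 hj2.le hmn
  · -- trivial quarter bound
    set x : ℝ := H / ((N:ℝ) * L)
    nlinarith [sq_nonneg (x - 1/2)]
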